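/- arXiv:0803.3763 — 3 statements merged into one kernel-verified Lean document; each statement's English description precedes it below -/
import Mathlib

section
/- Fix a part 𝔟 and a centre y₀ ∈ ℝ³. If the external power vanishes on every rotational rigid rate pair, i.e. for every q ∈ ℝ³ one has P^ext_𝔟(q × (y − y₀), Aq) = 0 (invariance of the external power under rotational semi-classical changes in observers, using its linearity in the rates), then the integral balance of moments holds on 𝔟: ∫_𝔟 ((y−y₀) × b + Aᵀβ) dx + ∫_∂𝔟 ((y−y₀) × (Pn) + Aᵀ(Sn)) dH² = 0. -/
open MeasureTheory RealInnerProductSpace Matrix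

noncomputable section

/-- Euclidean 3-space, the ambient space. -/
abbrev E3 := EuclideanSpace ℝ (Fin 3)

/-- `ℝ^m`, the linear space in which the manifold of substructural shapes is embedded. -/
abbrev Ev (m : ℕ) := EuclideanSpace ℝ (Fin m)

/-- Reinterpret a plain function `Fin 3 → ℝ` as an element of Euclidean 3-space. -/
def toE3 (v : Fin 3 → ℝ) : E3 := WithLp.toLp 2 v

/-- Reinterpret a plain function `Fin m → ℝ` as an element of `ℝ^m`. -/
def toEv {m : ℕ} (v : Fin m → ℝ) : Ev m := WithLp.toLp 2 v

/-- The cross product on `ℝ³`. -/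
def cross (u v : E3) : E3 :=
  toE3 ![u 1 * v 2 - u 2 * v 1, u 2 * v 0 - u 0 * v 2, u 0 * v 1 - u 1 * v 0]

/-- A *part* `𝔟` of the body `B`: a bounded open subset, with closure contained in `B`,
whose boundary `∂𝔟 = frontier carrier` is of class C¹ and carries the outward unit normal
field `n`.  The C¹ regularity of the boundary is encoded functionally: the 2-dimensional
Hausdorff measure of the boundary is finite and the Gauss–Green (divergence) theorem holds
on the part. -/
structure BodyPart (B : Set E3) where
  carrier : Set E3
  n : E3 → E3
  isOpen : IsOpen carrier
  isBounded : Bornology.IsBounded carrier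
  closure_subset : closure carrier ⊆ B
  unit_normal : ∀ x ∈ frontier carrier, ‖n x‖ = 1
  finite_boundary : μH[2] (frontier carrier) ≠ ⊤
  gauss_green : ∀ f : E3 → E3, ContDiff ℝ 1 f →
    (∫ x in carrier, ∑ j, fderiv ℝ f x (EuclideanSpace.single j 1) j)
      = ∫ x in frontier carrier, ⟪f x, n x⟫ ∂μH[2]

/-- The external power `P^ext_𝔟(v,w)` of the bulk actions `b, β` and the contact actions
`Pn, Sn` over the part `𝔟`, spent on the rate pair `(v, w)`. -/
def extPower {B : Set E3} {m : ℕ} (b : E3 → E3) (β : E3 → Ev m)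
    (P : E3 → Matrix (Fin 3) (Fin 3) ℝ) (S : E3 → Matrix (Fin m) (Fin 3) ℝ)
    (𝔟 : BodyPart B) (v : E3 → E3) (w : E3 → Ev m) : ℝ :=
  (∫ x in 𝔟.carrier, ((∑ i, b x i * v x i) + ∑ α, β x α * w x α))
  + ∫ x in frontier 𝔟.carrier,
      ((∑ i, (P x).mulVec (𝔟.n x) i * v x i)
        + ∑ α, (S x).mulVec (𝔟.n x) α * w x α) ∂μH[2]

/-- The referential divergence of a `Hom(ℝ³,ℝ³)`-valued field, `(Div P)_i = Σ_j ∂_j P_{ij}`. -/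
def matDiv (P : E3 → Matrix (Fin 3) (Fin 3) ℝ) (x : E3) : E3 :=
  toE3 fun i => ∑ j, fderiv ℝ (fun x' => P x' i j) x (EuclideanSpace.single j 1)

/-- The referential divergence of a `Hom(ℝ³,ℝ^m)`-valued field, `(Div S)_α = Σ_j ∂_j S_{αj}`. -/
def matDivS {m : ℕ} (S : E3 → Matrix (Fin m) (Fin 3) ℝ) (x : E3) : Ev m :=
  toEv fun α => ∑ j, fderiv ℝ (fun x' => S x' α j) x (EuclideanSpace.single j 1)

/-- Ricci's alternating symbol `ε_{ijk}`. -/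
def levi (i j k : Fin 3) : ℝ :=
  if (i, j, k) = (0, 1, 2) ∨ (i, j, k) = (1, 2, 0) ∨ (i, j, k) = (2, 0, 1) then 1
  else if (i, j, k) = (0, 2, 1) ∨ (i, j, k) = (2, 1, 0) ∨ (i, j, k) = (1, 0, 2) then -1
  else 0

/-- `(ε M)_i = Σ_{j,k} ε_{ijk} M_{jk}`. -/
def ric (M : Matrix (Fin 3) (Fin 3) ℝ) : E3 :=
  toE3 fun i => ∑ j, ∑ k, levi i j k * M j k

/-- The spatial gradient of a map `y : ℝ³ → ℝ³` as a matrix field: `F = Dy`,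
`F_{ij} = ∂_j y_i`. -/
def gradMat (y : E3 → E3) (x : E3) : Matrix (Fin 3) (Fin 3) ℝ :=
  Matrix.of fun i j => fderiv ℝ (fun x' => y x' i) x (EuclideanSpace.single j 1)

/-- `((D Aᵀ)·S)(x) = Σ_j (∂_j Aᵀ(x))(S(x) e_j)`, componentwise
`Σ_j Σ_α (∂_j A_{αi}) S_{αj}`. -/
def gradTdotS {m : ℕ} (A S : E3 → Matrix (Fin m) (Fin 3) ℝ) (x : E3) : E3 :=
  toE3 fun i => ∑ j, ∑ α,
    fderiv ℝ (fun x' => A x' α i) x (EuclideanSpace.single j 1) * S x α j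

/-- If the external power vanishes on every rotational rigid rate pair
`(q × (y − y₀), A q)`, then the integral balance of moments holds on the part `𝔟`
about the centre `y₀`. -/
theorem moment_balance_of_rotational_invariance
    {m : ℕ} (B : Set E3) (hB : IsOpen B)
    (b y : E3 → E3) (β : E3 → Ev m)
    (P : E3 → Matrix (Fin 3) (Fin 3) ℝ)
    (S A : E3 → Matrix (Fin m) (Fin 3) ℝ)
    (𝔟 : BodyPart B) (y₀ : E3)
    -- integrability of the integrands
    (hyb : IntegrableOn (fun x => cross (y x - y₀) (b x)) 𝔟.carrier)
    (hAβ : IntegrableOn (fun x => toE3 ((A x)ᵀ.mulVec (β x))) 𝔟.carrier)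
    (hyPn : IntegrableOn (fun x => cross (y x - y₀) (toE3 ((P x).mulVec (𝔟.n x))))
      (frontier 𝔟.carrier) μH[2])
    (hASn : IntegrableOn (fun x => toE3 ((A x)ᵀ.mulVec ((S x).mulVec (𝔟.n x))))
      (frontier 𝔟.carrier) μH[2])
    -- invariance of the external power under rotational semi-classical changes
    -- in observers: it vanishes on every rotational rigid rate pair
    (hrot : ∀ q : E3,
      extPower b β P S 𝔟
        (fun x => cross q (y x - y₀))
        (fun x => toEv ((A x).mulVec q)) = 0) :
    -- integral balance of moments on 𝔟 about y₀
    (∫ x in 𝔟.carrier,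
        (cross (y x - y₀) (b x) + toE3 ((A x)ᵀ.mulVec (β x))))
      + (∫ x in frontier 𝔟.carrier,
          (cross (y x - y₀) (toE3 ((P x).mulVec (𝔟.n x)))
            + toE3 ((A x)ᵀ.mulVec ((S x).mulVec (𝔟.n x)))) ∂μH[2]) = 0 := by
  have key : ∀ i : Fin 3,
      ((∫ x in 𝔟.carrier,
          (cross (y x - y₀) (b x) + toE3 ((A x)ᵀ.mulVec (β x))))
        + (∫ x in frontier 𝔟.carrier,
            (cross (y x - y₀) (toE3 ((P x).mulVec (𝔟.n x)))
              + toE3 ((A x)ᵀ.mulVec ((S x).mulVec (𝔟.n x)))) ∂μH[2])) i = 0 := by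
    intro i
    set q : E3 := EuclideanSpace.single i 1 with hq
    have hF : IntegrableOn
        (fun x => cross (y x - y₀) (b x) + toE3 ((A x)ᵀ.mulVec (β x))) 𝔟.carrier :=
      hyb.add hAβ
    have hG : IntegrableOn
        (fun x => cross (y x - y₀) (toE3 ((P x).mulVec (𝔟.n x)))
          + toE3 ((A x)ᵀ.mulVec ((S x).mulVec (𝔟.n x)))) (frontier 𝔟.carrier) μH[2] :=
      hyPn.add hASn
    have hpt : ∀ (u c : E3) (M : Matrix (Fin m) (Fin 3) ℝ) (w : Ev m),
        (cross u c + toE3 (Mᵀ.mulVec w)) i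
          = (∑ j, c j * cross q u j) + ∑ α, w α * toEv (M.mulVec q) α := by
      intro u c M w
      have hqj : ∀ j : Fin 3, q j = if j = i then 1 else 0 := by
        intro j; simp [hq, EuclideanSpace.single_apply]
      have hM : ∀ α, toEv (M.mulVec q) α = M α i := by
        intro α
        simp only [toEv, Matrix.mulVec, dotProduct, PiLp.toLp_apply]
        rw [Finset.sum_congr rfl (fun j _ => by rw [hqj j])]
        simp
      have hAdd : (cross u c + toE3 (Mᵀ.mulVec w)) i
          = cross u c i + toE3 (Mᵀ.mulVec w) i := rfl
      rw [hAdd]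
      have hT : toE3 (Mᵀ.mulVec w) i = ∑ α, w α * toEv (M.mulVec q) α := by
        simp only [toE3, Matrix.mulVec, dotProduct, Matrix.transpose_apply, PiLp.toLp_apply]
        exact Finset.sum_congr rfl fun α _ => by rw [hM, mul_comm]
      rw [hT]
      congr 1
      fin_cases i <;>
        simp [cross, toE3, Fin.sum_univ_three, hqj, PiLp.sub_apply] <;> ring
    have e1 : (∫ x in 𝔟.carrier,
        (cross (y x - y₀) (b x) + toE3 ((A x)ᵀ.mulVec (β x)))) i
        = ∫ x in 𝔟.carrier,
            ((∑ j, b x j * cross q (y x - y₀) j)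
              + ∑ α, β x α * toEv ((A x).mulVec q) α) := by
      have h' := ((EuclideanSpace.proj (𝕜 := ℝ) i).integral_comp_comm hF).symm
      exact h'.trans
        (integral_congr_ae (Filter.Eventually.of_forall fun x => hpt _ _ _ _))
    have e2 : (∫ x in frontier 𝔟.carrier,
        (cross (y x - y₀) (toE3 ((P x).mulVec (𝔟.n x)))
          + toE3 ((A x)ᵀ.mulVec ((S x).mulVec (𝔟.n x)))) ∂μH[2]) i
        = ∫ x in frontier 𝔟.carrier,
            ((∑ j, (P x).mulVec (𝔟.n x) j * cross q (y x - y₀) j)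
              + ∑ α, (S x).mulVec (𝔟.n x) α * toEv ((A x).mulVec q) α) ∂μH[2] := by
      have h' := ((EuclideanSpace.proj (𝕜 := ℝ) i).integral_comp_comm hG).symm
      exact h'.trans
        (integral_congr_ae (Filter.Eventually.of_forall fun x => hpt (y x - y₀)
          (toE3 ((P x).mulVec (𝔟.n x))) (A x) (toEv ((S x).mulVec (𝔟.n x)))))
    have h := hrot q
    rw [extPower] at h
    have hAdd2 : ((∫ x in 𝔟.carrier,
          (cross (y x - y₀) (b x) + toE3 ((A x)ᵀ.mulVec (β x))))
        + (∫ x in frontier 𝔟.carrier,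
            (cross (y x - y₀) (toE3 ((P x).mulVec (𝔟.n x)))
              + toE3 ((A x)ᵀ.mulVec ((S x).mulVec (𝔟.n x)))) ∂μH[2])) i
        = (∫ x in 𝔟.carrier,
            (cross (y x - y₀) (b x) + toE3 ((A x)ᵀ.mulVec (β x)))) i
          + (∫ x in frontier 𝔟.carrier,
              (cross (y x - y₀) (toE3 ((P x).mulVec (𝔟.n x)))
                + toE3 ((A x)ᵀ.mulVec ((S x).mulVec (𝔟.n x)))) ∂μH[2]) i := rfl
    rw [hAdd2, e1, e2]
    exact h
  refine PiLp.ext fun i => ?_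
  simpa using key i
end
end

section
/- Theorem 1, part (i) (embedded form): suppose the external power of all actions on any part is invariant under rotational semi-classical changes in observers, i.e. for every part 𝔟 ⊆ B, every rotational velocity q ∈ ℝ³ and every centre y₀ ∈ ℝ³, P^ext_𝔟(q × (y − y₀), Aq) = 0. Then for every part 𝔟 and every y₀ ∈ ℝ³ both integral balances of actions hold: the balance of forces ∫_𝔟 b dx + ∫_∂𝔟 Pn dH² = 0, and the balance of moments ∫_𝔟 ((y−y₀) × b + Aᵀβ) dx + ∫_∂𝔟 ((y−y₀) × (Pn) + Aᵀ(Sn)) dH² = 0. -/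
open MeasureTheory RealInnerProductSpace Matrix

noncomputable section

section BalanceHelpers

open MeasureTheory RealInnerProductSpace Matrix

/-! ### Small algebraic helpers -/

lemma innerE3_eq (q u : E3) : ⟪q, u⟫ = ∑ i, q i * u i := by
  simp [PiLp.inner_apply, RCLike.inner_apply, conj_trivial]
  exact Finset.sum_congr rfl fun _ _ => mul_comm _ _

lemma tripleProd (q d p : E3) : (∑ i, p i * cross q d i) = ⟪q, cross d p⟫ := by
  rw [innerE3_eq]
  simp [cross, toE3, Fin.sum_univ_three]
  ring

lemma AtransId {m : ℕ} (q : E3) (M : Matrix (Fin m) (Fin 3) ℝ) (w : Fin m → ℝ) :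
    (∑ α, w α * M.mulVec q α) = ∑ i, q i * Mᵀ.mulVec w i := by
  simp only [Matrix.mulVec, dotProduct, Matrix.transpose_apply, Finset.mul_sum]
  rw [Finset.sum_comm]
  exact Finset.sum_congr rfl fun _ _ => Finset.sum_congr rfl fun _ _ => by ring

lemma powIdent {m : ℕ} (q yy bb : E3) (AA : Matrix (Fin m) (Fin 3) ℝ) (ββ : Fin m → ℝ) :
    ((∑ i, bb i * cross q yy i) + ∑ α, ββ α * toEv (AA.mulVec q) α)
      = ⟪q, cross yy bb + toE3 (AAᵀ.mulVec ββ)⟫ := by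
  show ((∑ i, bb i * cross q yy i) + ∑ α, ββ α * AA.mulVec q α) = _
  have h2 : ⟪q, (toE3 (AAᵀ.mulVec ββ) : E3)⟫ = ∑ i, q i * AAᵀ.mulVec ββ i := innerE3_eq _ _
  rw [inner_add_right, ← tripleProd q yy bb, h2, AtransId]

lemma cross_zero_forall {v : E3} (h : ∀ c : E3, cross c v = 0) : v = 0 := by
  have h0 := congrArg (fun w : E3 => w 1) (h (EuclideanSpace.single 0 1))
  have h1 := congrArg (fun w : E3 => w 2) (h (EuclideanSpace.single 0 1))
  have h2 := congrArg (fun w : E3 => w 2) (h (EuclideanSpace.single 1 1))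
  ext i
  fin_cases i <;>
    simp [cross, toE3, EuclideanSpace.single_apply] at h0 h1 h2 ⊢ <;> linarith

lemma crossDiff (c yy p t : E3) :
    (cross (yy - 0) p + t) - (cross (yy - c) p + t) = cross c p := by
  ext i
  fin_cases i <;>
    simp [cross, toE3, PiLp.add_apply, PiLp.sub_apply, PiLp.zero_apply] <;> ring

/-- The cross product with a fixed first argument, as a continuous linear map. -/
def crossL (a : E3) : E3 →L[ℝ] E3 :=
  LinearMap.toContinuousLinearMap
    { toFun := fun v => cross a v
      map_add' := by
        intro u v
        ext i
        fin_cases i <;> simp [cross, toE3, PiLp.add_apply] <;> ring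
      map_smul' := by
        intro c v
        ext i
        fin_cases i <;> simp [cross, toE3, PiLp.smul_apply] <;> ring }

@[simp] lemma crossL_apply (a v : E3) : crossL a v = cross a v := rfl

/-! ### Integrability helpers -/

/-- Scalar functions that are a.e. measurable and bounded on `s`. -/
def NiceOn (s : Set E3) (μ : Measure E3) (f : E3 → ℝ) : Prop :=
  AEMeasurable f (μ.restrict s) ∧ ∃ C, ∀ x ∈ s, |f x| ≤ C

namespace NiceOn

variable {s : Set E3} {μ : Measure E3} {f g : E3 → ℝ}

lemma const (c : ℝ) : NiceOn s μ (fun _ => c) :=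
  ⟨aemeasurable_const, ⟨|c|, fun _ _ => le_rfl⟩⟩

lemma add (hf : NiceOn s μ f) (hg : NiceOn s μ g) : NiceOn s μ (fun x => f x + g x) := by
  obtain ⟨hfm, Cf, hCf⟩ := hf; obtain ⟨hgm, Cg, hCg⟩ := hg
  exact ⟨hfm.add hgm, ⟨Cf + Cg, fun x hx =>
    (abs_add_le _ _).trans (add_le_add (hCf x hx) (hCg x hx))⟩⟩

lemma neg (hf : NiceOn s μ f) : NiceOn s μ (fun x => -f x) := by
  obtain ⟨hfm, Cf, hCf⟩ := hf
  exact ⟨hfm.neg, ⟨Cf, fun x hx => by simpa using hCf x hx⟩⟩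

lemma sub (hf : NiceOn s μ f) (hg : NiceOn s μ g) : NiceOn s μ (fun x => f x - g x) := by
  simpa [sub_eq_add_neg] using hf.add hg.neg

lemma mul (hf : NiceOn s μ f) (hg : NiceOn s μ g) : NiceOn s μ (fun x => f x * g x) := by
  obtain ⟨hfm, Cf, hCf⟩ := hf; obtain ⟨hgm, Cg, hCg⟩ := hg
  refine ⟨hfm.mul hgm, ⟨|Cf| * |Cg|, fun x hx => ?_⟩⟩
  rw [abs_mul]
  exact mul_le_mul ((hCf x hx).trans (le_abs_self _)) ((hCg x hx).trans (le_abs_self _))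
    (abs_nonneg _) (abs_nonneg _)

lemma finsetSum {ι : Type*} (t : Finset ι) {F : ι → E3 → ℝ}
    (h : ∀ i ∈ t, NiceOn s μ (F i)) : NiceOn s μ (fun x => ∑ i ∈ t, F i x) := by
  classical
  induction t using Finset.induction_on with
  | empty => simpa using const 0
  | @insert a t hni ih =>
    simp only [Finset.sum_insert hni]
    exact (h a (Finset.mem_insert_self a t)).add
      (ih fun i hi => h i (Finset.mem_insert_of_mem hi))

lemma of_continuousOn (hs : MeasurableSet s) (hK : IsCompact (closure s))
    (hf : ContinuousOn f (closure s)) : NiceOn s μ f := by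
  obtain ⟨C, hC⟩ := hK.exists_bound_of_continuousOn hf
  exact ⟨(hf.mono subset_closure).aemeasurable hs, ⟨C, fun x hx => by
    simpa [Real.norm_eq_abs] using hC x (subset_closure hx)⟩⟩

lemma integrable (hs : MeasurableSet s) (hμ : μ s ≠ ⊤) (h : NiceOn s μ f) :
    Integrable f (μ.restrict s) := by
  obtain ⟨hm, C, hC⟩ := h
  haveI : IsFiniteMeasure (μ.restrict s) :=
    ⟨by rw [Measure.restrict_apply_univ]; exact lt_top_iff_ne_top.2 hμ⟩
  refine ⟨hm.aestronglyMeasurable, HasFiniteIntegral.of_bounded (C := C) ?_⟩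
  filter_upwards [ae_restrict_mem hs] with x hx
  simpa [Real.norm_eq_abs] using hC x hx

lemma crossMom {m : ℕ} {u v : E3 → E3} {M : E3 → Matrix (Fin m) (Fin 3) ℝ}
    {w : E3 → Fin m → ℝ}
    (hu : ∀ i, NiceOn s μ (fun x => u x i)) (hv : ∀ i, NiceOn s μ (fun x => v x i))
    (hM : ∀ α i, NiceOn s μ (fun x => M x α i)) (hw : ∀ α, NiceOn s μ (fun x => w x α))
    (k : Fin 3) :
    NiceOn s μ (fun x => (cross (u x) (v x) + toE3 ((M x)ᵀ.mulVec (w x))) k) := by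
  have h1 : ∀ k' : Fin 3, NiceOn s μ (fun x => ∑ α, M x α k' * w x α) := fun k' =>
    NiceOn.finsetSum _ fun α _ => (hM α k').mul (hw α)
  fin_cases k
  · show NiceOn s μ fun x => (cross (u x) (v x) + toE3 ((M x)ᵀ.mulVec (w x))) (0 : Fin 3)
    have e : (fun x => (cross (u x) (v x) + toE3 ((M x)ᵀ.mulVec (w x))) (0 : Fin 3))
        = fun x => (u x 1 * v x 2 - u x 2 * v x 1) + ∑ α, M x α 0 * w x α := funext fun x => by
      simp [cross, toE3, PiLp.add_apply, Matrix.mulVec, dotProduct,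
        Matrix.transpose_apply]
    rw [e]
    exact (((hu 1).mul (hv 2)).sub ((hu 2).mul (hv 1))).add (h1 0)
  · show NiceOn s μ fun x => (cross (u x) (v x) + toE3 ((M x)ᵀ.mulVec (w x))) (1 : Fin 3)
    have e : (fun x => (cross (u x) (v x) + toE3 ((M x)ᵀ.mulVec (w x))) (1 : Fin 3))
        = fun x => (u x 2 * v x 0 - u x 0 * v x 2) + ∑ α, M x α 1 * w x α := funext fun x => by
      simp [cross, toE3, PiLp.add_apply, Matrix.mulVec, dotProduct,
        Matrix.transpose_apply]
    rw [e]
    exact (((hu 2).mul (hv 0)).sub ((hu 0).mul (hv 2))).add (h1 1)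
  · show NiceOn s μ fun x => (cross (u x) (v x) + toE3 ((M x)ᵀ.mulVec (w x))) (2 : Fin 3)
    have e : (fun x => (cross (u x) (v x) + toE3 ((M x)ᵀ.mulVec (w x))) (2 : Fin 3))
        = fun x => (u x 0 * v x 1 - u x 1 * v x 0) + ∑ α, M x α 2 * w x α := funext fun x => by
      simp [cross, toE3, PiLp.add_apply, Matrix.mulVec, dotProduct,
        Matrix.transpose_apply]
    rw [e]
    exact (((hu 0).mul (hv 1)).sub ((hu 1).mul (hv 0))).add (h1 2)

end NiceOn

lemma integrable_vec {s : Set E3} {μ : Measure E3}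
    {V : E3 → E3} (hi : ∀ k, Integrable (fun x => V x k) (μ.restrict s)) :
    Integrable V (μ.restrict s) := by
  have hrepr : V = fun x => ∑ k, V x k • EuclideanSpace.single k 1 := by
    funext x
    ext i
    simp [Fin.sum_univ_three, PiLp.add_apply, PiLp.smul_apply, EuclideanSpace.single_apply]
    fin_cases i <;> simp
  rw [hrepr]
  exact integrable_finset_sum _ fun k _ => (hi k).smul_const _

lemma coord_abs_le_norm (v : E3) (i : Fin 3) : |v i| ≤ ‖v‖ := by
  have h3 : (0:ℝ) ≤ ∑ j, ‖v j‖ ^ 2 := Finset.sum_nonneg fun _ _ => sq_nonneg _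
  have h4 : ‖v i‖ ^ 2 ≤ ∑ j, ‖v j‖ ^ 2 :=
    Finset.single_le_sum (fun j _ => sq_nonneg ‖v j‖) (Finset.mem_univ i)
  rw [EuclideanSpace.norm_eq]
  have := Real.sqrt_le_sqrt h4
  rw [Real.sqrt_sq_eq_abs] at this
  simpa [Real.norm_eq_abs, abs_abs] using this

end BalanceHelpers

set_option maxHeartbeats 1000000 in
/-- Theorem 1, part (i), embedded form. If the external power of all
actions on any part is invariant under rotational semi-classical changes in observers
(i.e. it vanishes on every rotational rigid rate pair, for every part, rotational
velocity `q` and centre `y₀`), then on every part and about every centre both the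
integral balance of forces and the integral balance of moments hold. -/
theorem integral_balances_of_SO3_invariance
    {m : ℕ} (B : Set E3) (hB : IsOpen B)
    (b y : E3 → E3) (β : E3 → Ev m)
    (P : E3 → Matrix (Fin 3) (Fin 3) ℝ)
    (S A : E3 → Matrix (Fin m) (Fin 3) ℝ)
    -- all fields are continuous on B
    (hbc : ContinuousOn b B) (hyc : ContinuousOn y B) (hβc : ContinuousOn β B)
    (hPc : ContinuousOn P B) (hSc : ContinuousOn S B) (hAc : ContinuousOn A B)
    -- SO(3) invariance of the external power
    (hrot : ∀ (𝔟 : BodyPart B) (q y₀ : E3),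
      extPower b β P S 𝔟
        (fun x => cross q (y x - y₀))
        (fun x => toEv ((A x).mulVec q)) = 0) :
    ∀ (𝔟 : BodyPart B) (y₀ : E3),
      -- integral balance of forces
      ((∫ x in 𝔟.carrier, b x)
        + (∫ x in frontier 𝔟.carrier, toE3 ((P x).mulVec (𝔟.n x)) ∂μH[2]) = 0)
      ∧
      -- integral balance of moments
      ((∫ x in 𝔟.carrier,
          (cross (y x - y₀) (b x) + toE3 ((A x)ᵀ.mulVec (β x))))
        + (∫ x in frontier 𝔟.carrier,
            (cross (y x - y₀) (toE3 ((P x).mulVec (𝔟.n x)))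
              + toE3 ((A x)ᵀ.mulVec ((S x).mulVec (𝔟.n x)))) ∂μH[2]) = 0) := by
  intro 𝔟 y₀
  classical
  by_cases hempty : 𝔟.carrier = ∅
  · constructor <;>
      simp [hempty, frontier_empty, Measure.restrict_empty, integral_zero_measure]
  · have hne : 𝔟.carrier.Nonempty := Set.nonempty_iff_ne_empty.2 hempty
    have hK : IsCompact (closure 𝔟.carrier) := 𝔟.isBounded.isCompact_closure
    have hs₁m : MeasurableSet 𝔟.carrier := 𝔟.isOpen.measurableSet
    have hs₂m : MeasurableSet (frontier 𝔟.carrier) := isClosed_frontier.measurableSet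
    have hfin₁ : volume 𝔟.carrier ≠ ⊤ :=
      ((measure_mono subset_closure).trans_lt hK.measure_lt_top).ne
    have hfin₂ : μH[2] (frontier 𝔟.carrier) ≠ ⊤ := 𝔟.finite_boundary
    have hfrsub : frontier 𝔟.carrier ⊆ closure 𝔟.carrier := frontier_subset_closure
    have hfrc : closure (frontier 𝔟.carrier) = frontier 𝔟.carrier :=
      isClosed_frontier.closure_eq
    have hK₂ : IsCompact (closure (frontier 𝔟.carrier)) := by
      rw [hfrc]; exact hK.of_isClosed_subset isClosed_frontier hfrsub
    have hNice₁ : ∀ f : E3 → ℝ, ContinuousOn f B → NiceOn 𝔟.carrier volume f := fun f hf =>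
      NiceOn.of_continuousOn hs₁m hK (hf.mono 𝔟.closure_subset)
    have hNice₂ : ∀ f : E3 → ℝ, ContinuousOn f B → NiceOn (frontier 𝔟.carrier) μH[2] f :=
      fun f hf => NiceOn.of_continuousOn hs₂m hK₂
        (hf.mono (by rw [hfrc]; exact hfrsub.trans 𝔟.closure_subset))
    have cy : ∀ i, ContinuousOn (fun x => y x i) B := fun i =>
      (EuclideanSpace.proj (𝕜 := ℝ) i).continuous.comp_continuousOn hyc
    have cb : ∀ i, ContinuousOn (fun x => b x i) B := fun i =>
      (EuclideanSpace.proj (𝕜 := ℝ) i).continuous.comp_continuousOn hbc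
    have cβ : ∀ α, ContinuousOn (fun x => β x α) B := fun α =>
      (EuclideanSpace.proj (𝕜 := ℝ) α).continuous.comp_continuousOn hβc
    have cP : ∀ i j, ContinuousOn (fun x => P x i j) B := fun i j => by
      have h1 : Continuous fun M : Matrix (Fin 3) (Fin 3) ℝ => M i j :=
        (continuous_apply j).comp (continuous_apply i)
      exact h1.comp_continuousOn hPc
    have cS : ∀ α j, ContinuousOn (fun x => S x α j) B := fun α j => by
      have h1 : Continuous fun M : Matrix (Fin m) (Fin 3) ℝ => M α j :=
        (continuous_apply j).comp (continuous_apply α)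
      exact h1.comp_continuousOn hSc
    have cA : ∀ α j, ContinuousOn (fun x => A x α j) B := fun α j => by
      have h1 : Continuous fun M : Matrix (Fin m) (Fin 3) ℝ => M α j :=
        (continuous_apply j).comp (continuous_apply α)
      exact h1.comp_continuousOn hAc
    -- measurability of the normal field via Gauss–Green
    have hvolpos : (0:ℝ) < (volume 𝔟.carrier).toReal :=
      ENNReal.toReal_pos (𝔟.isOpen.measure_pos volume hne).ne' hfin₁
    have hlhsid : (fun x : E3 =>
          ∑ j, fderiv ℝ (fun x' : E3 => x') x (EuclideanSpace.single j 1) j)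
        = fun _ => (3:ℝ) :=
      funext fun x => by simp [fderiv_id', Fin.sum_univ_three, EuclideanSpace.single_apply]
    have hgg0 := 𝔟.gauss_green (fun x => x) contDiff_id
    rw [hlhsid, setIntegral_const] at hgg0
    have hInt0 : Integrable (fun x : E3 => ⟪x, 𝔟.n x⟫)
        ((μH[2]).restrict (frontier 𝔟.carrier)) := by
      by_contra hcon
      rw [integral_undef hcon] at hgg0
      have h30 : (volume 𝔟.carrier).toReal * 3 = 0 := by
        simpa [smul_eq_mul, Measure.real] using hgg0
      linarith
    have hnInt : ∀ i, Integrable (fun x => 𝔟.n x i)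
        ((μH[2]).restrict (frontier 𝔟.carrier)) := by
      intro i
      have hggi := 𝔟.gauss_green (fun x => x + EuclideanSpace.single i 1)
        (contDiff_id.add contDiff_const)
      have hl : (fun x : E3 => ∑ j, fderiv ℝ
            (fun x' : E3 => x' + (EuclideanSpace.single i 1 : E3))
            x (EuclideanSpace.single j 1) j) = fun _ => (3:ℝ) :=
        funext fun x => by
          simp [fderiv_add_const, fderiv_id', Fin.sum_univ_three, EuclideanSpace.single_apply]
      rw [hl, setIntegral_const] at hggi
      have hInti : Integrable (fun x : E3 => ⟪x + EuclideanSpace.single i 1, 𝔟.n x⟫)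
          ((μH[2]).restrict (frontier 𝔟.carrier)) := by
        by_contra hcon
        rw [integral_undef hcon] at hggi
        have h30 : (volume 𝔟.carrier).toReal * 3 = 0 := by
          simpa [smul_eq_mul, Measure.real] using hggi
        linarith
      have e : (fun x : E3 => ⟪x + EuclideanSpace.single i 1, 𝔟.n x⟫ - ⟪x, 𝔟.n x⟫)
          = fun x => 𝔟.n x i :=
        funext fun x => by
          rw [inner_add_left]
          simp [EuclideanSpace.inner_single_left]
      exact e ▸ hInti.sub hInt0
    have hnNice : ∀ i, NiceOn (frontier 𝔟.carrier) μH[2] (fun x => 𝔟.n x i) := fun i =>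
      ⟨(hnInt i).aemeasurable, 1, fun x hx => by
        have h := coord_abs_le_norm (𝔟.n x) i
        rwa [𝔟.unit_normal x hx] at h⟩
    -- integrability of the vector integrands
    have hbInt : Integrable b (volume.restrict 𝔟.carrier) :=
      integrable_vec fun k => (hNice₁ _ (cb k)).integrable hs₁m hfin₁
    have hGInt : ∀ y₀' : E3,
        Integrable (fun x => cross (y x - y₀') (b x) + toE3 ((A x)ᵀ.mulVec (β x)))
          (volume.restrict 𝔟.carrier) := by
      intro y₀'
      refine integrable_vec fun k => NiceOn.integrable hs₁m hfin₁ ?_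
      exact NiceOn.crossMom (fun i => (hNice₁ _ (cy i)).sub (NiceOn.const (y₀' i)))
        (fun i => hNice₁ _ (cb i)) (fun α i => hNice₁ _ (cA α i))
        (fun α => hNice₁ _ (cβ α)) k
    have hNvNice : ∀ k, NiceOn (frontier 𝔟.carrier) μH[2]
        (fun x => toE3 ((P x).mulVec (𝔟.n x)) k) := by
      intro k
      have e : (fun x => toE3 ((P x).mulVec (𝔟.n x)) k)
          = fun x => ∑ j, P x k j * 𝔟.n x j := funext fun x => rfl
      rw [e]
      exact NiceOn.finsetSum _ fun j _ => (hNice₂ _ (cP k j)).mul (hnNice j)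
    have hSnNice : ∀ α, NiceOn (frontier 𝔟.carrier) μH[2]
        (fun x => (S x).mulVec (𝔟.n x) α) := by
      intro α
      have e : (fun x => (S x).mulVec (𝔟.n x) α)
          = fun x => ∑ j, S x α j * 𝔟.n x j := funext fun x => rfl
      rw [e]
      exact NiceOn.finsetSum _ fun j _ => (hNice₂ _ (cS α j)).mul (hnNice j)
    have hNInt : Integrable (fun x => toE3 ((P x).mulVec (𝔟.n x)))
        ((μH[2]).restrict (frontier 𝔟.carrier)) :=
      integrable_vec fun k => NiceOn.integrable hs₂m hfin₂ (hNvNice k)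
    have hFInt : ∀ y₀' : E3,
        Integrable (fun x => cross (y x - y₀') (toE3 ((P x).mulVec (𝔟.n x)))
            + toE3 ((A x)ᵀ.mulVec ((S x).mulVec (𝔟.n x))))
          ((μH[2]).restrict (frontier 𝔟.carrier)) := by
      intro y₀'
      refine integrable_vec fun k => NiceOn.integrable hs₂m hfin₂ ?_
      exact NiceOn.crossMom (fun i => (hNice₂ _ (cy i)).sub (NiceOn.const (y₀' i)))
        hNvNice (fun α i => hNice₂ _ (cA α i)) hSnNice k
    -- balance of moments, about an arbitrary centre
    have hMom : ∀ y₀' : E3,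
        (∫ x in 𝔟.carrier, (cross (y x - y₀') (b x) + toE3 ((A x)ᵀ.mulVec (β x))))
          + (∫ x in frontier 𝔟.carrier,
              (cross (y x - y₀') (toE3 ((P x).mulVec (𝔟.n x)))
                + toE3 ((A x)ᵀ.mulVec ((S x).mulVec (𝔟.n x)))) ∂μH[2]) = 0 := by
      intro y₀'
      have key : ∀ q : E3,
          ⟪q, (∫ x in 𝔟.carrier, (cross (y x - y₀') (b x) + toE3 ((A x)ᵀ.mulVec (β x))))
            + (∫ x in frontier 𝔟.carrier,
                (cross (y x - y₀') (toE3 ((P x).mulVec (𝔟.n x)))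
                  + toE3 ((A x)ᵀ.mulVec ((S x).mulVec (𝔟.n x)))) ∂μH[2])⟫ = 0 := by
        intro q
        have h := hrot 𝔟 q y₀'
        simp only [extPower] at h
        have eb : (fun x => (∑ i, b x i * cross q (y x - y₀') i)
              + ∑ α, β x α * toEv ((A x).mulVec q) α)
            = fun x => (⟪q, cross (y x - y₀') (b x) + toE3 ((A x)ᵀ.mulVec (β x))⟫ : ℝ) :=
          funext fun x => powIdent q (y x - y₀') (b x) (A x) (β x)
        have es : (fun x => (∑ i, (P x).mulVec (𝔟.n x) i * cross q (y x - y₀') i)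
              + ∑ α, (S x).mulVec (𝔟.n x) α * toEv ((A x).mulVec q) α)
            = fun x => (⟪q, cross (y x - y₀') (toE3 ((P x).mulVec (𝔟.n x)))
                + toE3 ((A x)ᵀ.mulVec ((S x).mulVec (𝔟.n x)))⟫ : ℝ) :=
          funext fun x => powIdent q (y x - y₀') (toE3 ((P x).mulVec (𝔟.n x))) (A x)
            ((S x).mulVec (𝔟.n x))
        rw [eb, es, integral_inner (hGInt y₀') q, integral_inner (hFInt y₀') q,
          ← inner_add_right] at h
        exact h
      exact inner_self_eq_zero.1 (key _)
    -- balance of forces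
    have hforce : (∫ x in 𝔟.carrier, b x)
        + (∫ x in frontier 𝔟.carrier, toE3 ((P x).mulVec (𝔟.n x)) ∂μH[2]) = 0 := by
      refine cross_zero_forall fun c => ?_
      have h1 := hMom 0
      have h2 := hMom c
      have e1 : (∫ x in 𝔟.carrier, (cross (y x - 0) (b x) + toE3 ((A x)ᵀ.mulVec (β x))))
            - (∫ x in 𝔟.carrier, (cross (y x - c) (b x) + toE3 ((A x)ᵀ.mulVec (β x))))
          = crossL c (∫ x in 𝔟.carrier, b x) := by
        rw [← integral_sub (hGInt 0) (hGInt c),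
          ← ContinuousLinearMap.integral_comp_comm _ hbInt]
        exact integral_congr_ae (Filter.Eventually.of_forall fun x =>
          crossDiff c (y x) (b x) (toE3 ((A x)ᵀ.mulVec (β x))))
      have e2 : (∫ x in frontier 𝔟.carrier,
              (cross (y x - 0) (toE3 ((P x).mulVec (𝔟.n x)))
                + toE3 ((A x)ᵀ.mulVec ((S x).mulVec (𝔟.n x)))) ∂μH[2])
            - (∫ x in frontier 𝔟.carrier,
              (cross (y x - c) (toE3 ((P x).mulVec (𝔟.n x)))
                + toE3 ((A x)ᵀ.mulVec ((S x).mulVec (𝔟.n x)))) ∂μH[2])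
          = crossL c (∫ x in frontier 𝔟.carrier, toE3 ((P x).mulVec (𝔟.n x)) ∂μH[2]) := by
        rw [← integral_sub (hFInt 0) (hFInt c),
          ← ContinuousLinearMap.integral_comp_comm _ hNInt]
        exact integral_congr_ae (Filter.Eventually.of_forall fun x =>
          crossDiff c (y x) (toE3 ((P x).mulVec (𝔟.n x)))
            (toE3 ((A x)ᵀ.mulVec ((S x).mulVec (𝔟.n x)))))
      have hsum : crossL c ((∫ x in 𝔟.carrier, b x)
          + (∫ x in frontier 𝔟.carrier, toE3 ((P x).mulVec (𝔟.n x)) ∂μH[2])) = 0 := by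
        rw [map_add, ← e1, ← e2]
        rw [show ∀ a b c d : E3, (a - b) + (c - d) = (a + c) - (b + d) from
          fun a b c d => by abel]
        rw [h1, h2, sub_zero]
      simpa using hsum
    exact ⟨hforce, hMom y₀⟩
end
end

section
/- Rotational invariance implies full isometric invariance of the external power: suppose that for every part 𝔟, every q ∈ ℝ³ and every centre y₀ ∈ ℝ³ one has P^ext_𝔟(q × (y − y₀), Aq) = 0. Then also P^ext_𝔟(c, 0) = 0 for every constant translational velocity c ∈ ℝ³ and every part 𝔟; consequently P^ext_𝔟(c + q × (y − y₀), Aq) = 0 for all c, q, y₀, i.e. the external power is invariant under all isometric semi-classical changes in observers (the semi-direct product ℝ³ ⋉ SO(3)). -/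
open MeasureTheory RealInnerProductSpace Matrix

noncomputable section

section Aux

variable {m : ℕ} {B : Set E3}

lemma frontier_compact (𝔟 : BodyPart B) : IsCompact (frontier 𝔟.carrier) :=
  Metric.isCompact_of_isClosed_isBounded isClosed_frontier
    (𝔟.isBounded.closure.subset frontier_subset_closure)

lemma frontier_subset_B (𝔟 : BodyPart B) : frontier 𝔟.carrier ⊆ B :=
  frontier_subset_closure.trans 𝔟.closure_subset

lemma contOn_coord {k : ℕ} {f : E3 → EuclideanSpace ℝ (Fin k)} (hf : ContinuousOn f B)
    (i : Fin k) : ContinuousOn (fun x => f x i) B :=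
  (EuclideanSpace.proj (𝕜 := ℝ) i).continuous.comp_continuousOn hf

lemma contOn_entry {k l : ℕ} {M : E3 → Matrix (Fin k) (Fin l) ℝ} (hM : ContinuousOn M B)
    (i : Fin k) (j : Fin l) : ContinuousOn (fun x => M x i j) B := by
  have h : Continuous (fun N : Matrix (Fin k) (Fin l) ℝ => N i j) :=
    (continuous_apply j).comp (continuous_apply i)
  exact h.comp_continuousOn hM

lemma abs_coord_le {k : ℕ} (v : EuclideanSpace ℝ (Fin k)) (i : Fin k) : |v i| ≤ ‖v‖ := by
  have h := abs_real_inner_le_norm (EuclideanSpace.single i (1:ℝ)) v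
  rw [EuclideanSpace.inner_single_left, EuclideanSpace.norm_single] at h
  simpa using h

/-- The outward normal field of a part is a.e. strongly measurable on the boundary,
thanks to the Gauss–Green hypothesis. -/
lemma aemeas_n (𝔟 : BodyPart B) (i : Fin 3) :
    AEStronglyMeasurable (fun x => 𝔟.n x i) (μH[2].restrict (frontier 𝔟.carrier)) := by
  rcases Set.eq_empty_or_nonempty 𝔟.carrier with h | h
  · rw [h, frontier_empty, Measure.restrict_empty]
    exact aestronglyMeasurable_zero_measure _
  · have hvol0 : volume 𝔟.carrier ≠ 0 := (𝔟.isOpen.measure_pos volume h).ne'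
    have hvolT : volume 𝔟.carrier ≠ ⊤ := 𝔟.isBounded.measure_lt_top.ne
    have key : ∀ a : ℝ, Integrable (fun x : E3 => (x i - a) * 𝔟.n x i)
        (μH[2].restrict (frontier 𝔟.carrier)) := by
      intro a
      set f : E3 → E3 := fun x => (x i - a) • (EuclideanSpace.single i (1:ℝ)) with hf_def
      have hproj : ContDiff ℝ 1 (fun x : E3 => x i - a) :=
        ((EuclideanSpace.proj (𝕜 := ℝ) i).contDiff).sub contDiff_const
      have hf : ContDiff ℝ 1 f := hproj.smul contDiff_const
      have hgg := 𝔟.gauss_green f hf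
      have hL : (fun x : E3 => ∑ j, fderiv ℝ f x (EuclideanSpace.single j 1) j)
          = fun _ => (1:ℝ) := by
        funext x
        have hdiff : DifferentiableAt ℝ (fun x : E3 => x i - a) x :=
          ((EuclideanSpace.proj (𝕜 := ℝ) i).differentiableAt).sub_const a
        have h1 : fderiv ℝ f x = (fderiv ℝ (fun x : E3 => x i - a) x).smulRight
            (EuclideanSpace.single i (1:ℝ)) := fderiv_smul_const hdiff _
        have h2 : fderiv ℝ (fun x : E3 => x i - a) x = (EuclideanSpace.proj (𝕜 := ℝ) i) := by
          rw [fderiv_sub_const]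
          exact (EuclideanSpace.proj (𝕜 := ℝ) i).fderiv
        rw [h1, h2]
        simp [ContinuousLinearMap.smulRight_apply, EuclideanSpace.proj, PiLp.proj,
          EuclideanSpace.single_apply, Finset.sum_ite_eq]
        show (EuclideanSpace.single i (1:ℝ) : E3) i = 1
        simp
      rw [hL] at hgg
      have hvol : (∫ _ in 𝔟.carrier, (1:ℝ)) = (volume 𝔟.carrier).toReal := by
        simp
        rfl
      have hinner : (fun x : E3 => ⟪f x, 𝔟.n x⟫) = fun x : E3 => (x i - a) * 𝔟.n x i := by
        funext x
        simp [hf_def, PiLp.inner_apply, PiLp.smul_apply, EuclideanSpace.single_apply,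
          smul_eq_mul, mul_ite, Finset.sum_ite_eq]
        ring
      rw [hvol] at hgg
      by_contra hni
      have : (∫ x in frontier 𝔟.carrier, ⟪f x, 𝔟.n x⟫ ∂μH[2]) = 0 := by
        rw [show (fun x : E3 => ⟪f x, 𝔟.n x⟫) = fun x : E3 => (x i - a) * 𝔟.n x i from hinner]
        exact integral_undef hni
      rw [this] at hgg
      exact (ENNReal.toReal_eq_zero_iff _ |>.mp hgg).elim hvol0 hvolT
    have hsub : Integrable (fun x => 𝔟.n x i) (μH[2].restrict (frontier 𝔟.carrier)) :=
      ((key 0).sub (key 1)).congr (Filter.Eventually.of_forall fun x => by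
        simp only [Pi.sub_apply]; ring)
    exact hsub.aestronglyMeasurable

/-- Any product of a field continuous on `B` with a component of the normal is integrable
on the boundary. -/
lemma integrable_mul_n (𝔟 : BodyPart B) {c : E3 → ℝ} (hc : ContinuousOn c B) (j : Fin 3) :
    Integrable (fun x => c x * 𝔟.n x j) (μH[2].restrict (frontier 𝔟.carrier)) := by
  have hfm : MeasurableSet (frontier 𝔟.carrier) := isClosed_frontier.measurableSet
  have hcf : ContinuousOn c (frontier 𝔟.carrier) := hc.mono (frontier_subset_B 𝔟)
  obtain ⟨M, hM⟩ := (frontier_compact 𝔟).exists_bound_of_continuousOn hcf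
  refine ⟨(hcf.aestronglyMeasurable hfm).mul (aemeas_n 𝔟 j), ?_⟩
  apply HasFiniteIntegral.restrict_of_bounded (C := M) 𝔟.finite_boundary.lt_top
  filter_upwards [ae_restrict_mem hfm] with x hx
  have h1 : |𝔟.n x j| ≤ 1 := by
    have := abs_coord_le (𝔟.n x) j
    rwa [𝔟.unit_normal x hx] at this
  calc ‖c x * 𝔟.n x j‖ = |c x| * |𝔟.n x j| := abs_mul _ _
    _ ≤ |c x| * 1 := by gcongr
    _ = ‖c x‖ := by rw [mul_one]; rfl
    _ ≤ M := hM x hx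

lemma bulk_integrable (𝔟 : BodyPart B) {g : E3 → ℝ} (hg : ContinuousOn g B) :
    IntegrableOn g 𝔟.carrier volume := by
  have h : IntegrableOn g (closure 𝔟.carrier) volume :=
    (hg.mono 𝔟.closure_subset).integrableOn_compact 𝔟.isBounded.isCompact_closure
  exact h.mono_set subset_closure

/-- The surface integrand of the external power is integrable on the boundary whenever the
rate fields are componentwise continuous on `B`. -/
lemma surf_integrable (𝔟 : BodyPart B)
    {P : E3 → Matrix (Fin 3) (Fin 3) ℝ} {S : E3 → Matrix (Fin m) (Fin 3) ℝ}
    (hPc : ContinuousOn P B) (hSc : ContinuousOn S B)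
    {v : E3 → E3} {w : E3 → Ev m}
    (hv : ∀ i, ContinuousOn (fun x => v x i) B) (hw : ∀ α, ContinuousOn (fun x => w x α) B) :
    Integrable (fun x => (∑ i, (P x).mulVec (𝔟.n x) i * v x i)
        + ∑ α, (S x).mulVec (𝔟.n x) α * w x α) (μH[2].restrict (frontier 𝔟.carrier)) := by
  have heq : (fun x => (∑ i, (P x).mulVec (𝔟.n x) i * v x i)
        + ∑ α, (S x).mulVec (𝔟.n x) α * w x α)
      = fun x => ∑ j : Fin 3,
          ((∑ i, P x i j * v x i) + ∑ α, S x α j * w x α) * 𝔟.n x j := by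
    funext x
    simp only [Matrix.mulVec, dotProduct, Finset.sum_mul, add_mul,
      Finset.sum_add_distrib]
    congr 1 <;> rw [Finset.sum_comm] <;>
      exact Finset.sum_congr rfl fun i _ => Finset.sum_congr rfl fun j _ => by ring
  rw [heq]
  apply integrable_finset_sum
  intro j _
  apply integrable_mul_n 𝔟 ?_ j
  apply ContinuousOn.add
  · exact continuousOn_finset_sum _ fun i _ => (contOn_entry hPc i j).mul (hv i)
  · exact continuousOn_finset_sum _ fun α _ => (contOn_entry hSc α j).mul (hw α)

/-- Additivity of the external power in the rate pair, under continuity of all fields. -/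
lemma extPower_add (b : E3 → E3) (β : E3 → Ev m)
    (P : E3 → Matrix (Fin 3) (Fin 3) ℝ) (S : E3 → Matrix (Fin m) (Fin 3) ℝ)
    (hbc : ContinuousOn b B) (hβc : ContinuousOn β B)
    (hPc : ContinuousOn P B) (hSc : ContinuousOn S B)
    (𝔟 : BodyPart B) (v v1 v2 : E3 → E3) (w w1 w2 : E3 → Ev m)
    (hv1 : ∀ i, ContinuousOn (fun x => v1 x i) B) (hv2 : ∀ i, ContinuousOn (fun x => v2 x i) B)
    (hw1 : ∀ α, ContinuousOn (fun x => w1 x α) B) (hw2 : ∀ α, ContinuousOn (fun x => w2 x α) B)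
    (hv : ∀ x, v x = v1 x + v2 x) (hw : ∀ x, w x = w1 x + w2 x) :
    extPower b β P S 𝔟 v w
      = extPower b β P S 𝔟 v1 w1 + extPower b β P S 𝔟 v2 w2 := by
  unfold extPower
  have ebulk : (fun x : E3 => (∑ i, b x i * v x i) + ∑ α, β x α * w x α)
      = fun x => ((∑ i, b x i * v1 x i) + ∑ α, β x α * w1 x α)
          + ((∑ i, b x i * v2 x i) + ∑ α, β x α * w2 x α) := by
    funext x
    simp only [hv x, hw x, PiLp.add_apply, mul_add, Finset.sum_add_distrib]
    ring
  have esurf : (fun x : E3 => (∑ i, (P x).mulVec (𝔟.n x) i * v x i)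
        + ∑ α, (S x).mulVec (𝔟.n x) α * w x α)
      = fun x => ((∑ i, (P x).mulVec (𝔟.n x) i * v1 x i)
            + ∑ α, (S x).mulVec (𝔟.n x) α * w1 x α)
          + ((∑ i, (P x).mulVec (𝔟.n x) i * v2 x i)
            + ∑ α, (S x).mulVec (𝔟.n x) α * w2 x α) := by
    funext x
    simp only [hv x, hw x, PiLp.add_apply, mul_add, Finset.sum_add_distrib]
    ring
  have hb1 : IntegrableOn (fun x => (∑ i, b x i * v1 x i) + ∑ α, β x α * w1 x α)
      𝔟.carrier volume := by
    apply bulk_integrable 𝔟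
    exact (continuousOn_finset_sum _ fun i _ => (contOn_coord hbc i).mul (hv1 i)).add
      (continuousOn_finset_sum _ fun α _ => (contOn_coord hβc α).mul (hw1 α))
  have hb2 : IntegrableOn (fun x => (∑ i, b x i * v2 x i) + ∑ α, β x α * w2 x α)
      𝔟.carrier volume := by
    apply bulk_integrable 𝔟
    exact (continuousOn_finset_sum _ fun i _ => (contOn_coord hbc i).mul (hv2 i)).add
      (continuousOn_finset_sum _ fun α _ => (contOn_coord hβc α).mul (hw2 α))
  have hs1 := surf_integrable 𝔟 hPc hSc hv1 hw1
  have hs2 := surf_integrable 𝔟 hPc hSc hv2 hw2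
  rw [ebulk, esurf, integral_add hb1 hb2, integral_add hs1 hs2]
  ring

lemma cross_add (q a c : E3) : cross q (a + c) = cross q a + cross q c := by
  ext i
  fin_cases i <;>
    simp [cross, toE3, PiLp.add_apply] <;> ring

lemma cross_decomp (c : E3) :
    c = cross (EuclideanSpace.single 1 1) (EuclideanSpace.single 2 (c 0))
      + (cross (EuclideanSpace.single 2 1) (EuclideanSpace.single 0 (c 1))
        + cross (EuclideanSpace.single 0 1) (EuclideanSpace.single 1 (c 2))) := by
  ext i
  fin_cases i <;>
    simp [cross, toE3, PiLp.add_apply, EuclideanSpace.single_apply]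

lemma contOn_cross (q y₀ : E3) {y : E3 → E3} (hyc : ContinuousOn y B) (i : Fin 3) :
    ContinuousOn (fun x => cross q (y x - y₀) i) B := by
  have base : ∀ k : Fin 3, ContinuousOn (fun x => y x k - y₀ k) B := fun k =>
    (contOn_coord hyc k).sub continuousOn_const
  have hsub : ∀ (k : Fin 3) (x : E3), (y x - y₀) k = y x k - y₀ k := fun _ _ => rfl
  fin_cases i <;>
    · simp only [cross, toE3, Matrix.cons_val_zero, Matrix.cons_val_one, Matrix.head_cons,
        Fin.isValue, Matrix.cons_val_two, Matrix.tail_cons, hsub, PiLp.toLp_apply]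
      exact (continuousOn_const.mul (base _)).sub (continuousOn_const.mul (base _))

lemma contOn_Aq {A : E3 → Matrix (Fin m) (Fin 3) ℝ} (hAc : ContinuousOn A B) (q : E3)
    (α : Fin m) : ContinuousOn (fun x => toEv ((A x).mulVec q) α) B := by
  have : (fun x => toEv ((A x).mulVec q) α) = fun x => ∑ j, A x α j * q j := by
    funext x; simp [toEv, Matrix.mulVec, dotProduct]
  rw [this]
  exact continuousOn_finset_sum _ fun j _ => (contOn_entry hAc α j).mul continuousOn_const

end Aux

/-- rotational invariance implies full isometric invariance of the
external power. If the external power vanishes on every rotational rigid rate pair,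
for every part, rotational velocity and centre, then it also vanishes on every constant
translational rate pair `(c, 0)`, and consequently on every isometric rigid rate pair
`(c + q × (y − y₀), A q)`: the external power is invariant under all isometric
semi-classical changes in observers (the semi-direct product `ℝ³ ⋉ SO(3)`). -/
theorem isometric_invariance_of_rotational_invariance
    {m : ℕ} (B : Set E3) (hB : IsOpen B)
    (b y : E3 → E3) (β : E3 → Ev m)
    (P : E3 → Matrix (Fin 3) (Fin 3) ℝ)
    (S A : E3 → Matrix (Fin m) (Fin 3) ℝ)
    -- all fields are continuous on B
    (hbc : ContinuousOn b B) (hyc : ContinuousOn y B) (hβc : ContinuousOn β B)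
    (hPc : ContinuousOn P B) (hSc : ContinuousOn S B) (hAc : ContinuousOn A B)
    -- rotational invariance of the external power
    (hrot : ∀ (𝔟 : BodyPart B) (q y₀ : E3),
      extPower b β P S 𝔟
        (fun x => cross q (y x - y₀))
        (fun x => toEv ((A x).mulVec q)) = 0) :
    -- translational invariance
    (∀ (𝔟 : BodyPart B) (c : E3),
      extPower b β P S 𝔟 (fun _ => c) (fun _ => 0) = 0)
    ∧
    -- full isometric invariance
    (∀ (𝔟 : BodyPart B) (c q y₀ : E3),
      extPower b β P S 𝔟
        (fun x => c + cross q (y x - y₀))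
        (fun x => toEv ((A x).mulVec q)) = 0) := by
  have hzero : ∀ α : Fin m, ContinuousOn (fun x : E3 => (0 : Ev m) α) B :=
    fun _ => continuousOn_const
  -- Step 1: the power vanishes on any constant rate of the form `cross q d`.
  have Tcross : ∀ (𝔟 : BodyPart B) (q d : E3),
      extPower b β P S 𝔟 (fun _ => cross q d) (fun _ => (0 : Ev m)) = 0 := by
    intro 𝔟 q d
    have h1 := hrot 𝔟 q (-d)
    have h2 := hrot 𝔟 q 0
    have hv : ∀ x, cross q (y x - (-d)) = cross q d + cross q (y x - 0) := by
      intro x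
      rw [show y x - (-d) = d + (y x - 0) by rw [sub_neg_eq_add, sub_zero, add_comm],
        cross_add]
    have hsplit := extPower_add b β P S hbc hβc hPc hSc 𝔟
      (fun x => cross q (y x - (-d))) (fun _ => cross q d) (fun x => cross q (y x - 0))
      (fun x => toEv ((A x).mulVec q)) (fun _ => (0 : Ev m)) (fun x => toEv ((A x).mulVec q))
      (fun _ => continuousOn_const) (contOn_cross q 0 hyc) hzero (contOn_Aq hAc q)
      hv (fun x => (zero_add _).symm)
    rw [h1, h2, add_zero] at hsplit
    linarith [hsplit]
  -- Step 2: translational invariance.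
  have Htrans : ∀ (𝔟 : BodyPart B) (c : E3),
      extPower b β P S 𝔟 (fun _ => c) (fun _ => (0 : Ev m)) = 0 := by
    intro 𝔟 c
    have hs1 := extPower_add b β P S hbc hβc hPc hSc 𝔟
      (fun _ => c)
      (fun _ => cross (EuclideanSpace.single 1 1) (EuclideanSpace.single 2 (c 0)))
      (fun _ => cross (EuclideanSpace.single 2 1) (EuclideanSpace.single 0 (c 1))
        + cross (EuclideanSpace.single 0 1) (EuclideanSpace.single 1 (c 2)))
      (fun _ => (0 : Ev m)) (fun _ => (0 : Ev m)) (fun _ => (0 : Ev m))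
      (fun _ => continuousOn_const) (fun _ => continuousOn_const) hzero hzero
      (fun _ => cross_decomp c) (fun _ => (zero_add 0).symm)
    have hs2 := extPower_add b β P S hbc hβc hPc hSc 𝔟
      (fun _ => cross (EuclideanSpace.single 2 1) (EuclideanSpace.single 0 (c 1))
        + cross (EuclideanSpace.single 0 1) (EuclideanSpace.single 1 (c 2)))
      (fun _ => cross (EuclideanSpace.single 2 1) (EuclideanSpace.single 0 (c 1)))
      (fun _ => cross (EuclideanSpace.single 0 1) (EuclideanSpace.single 1 (c 2)))
      (fun _ => (0 : Ev m)) (fun _ => (0 : Ev m)) (fun _ => (0 : Ev m))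
      (fun _ => continuousOn_const) (fun _ => continuousOn_const) hzero hzero
      (fun _ => rfl) (fun _ => (zero_add 0).symm)
    rw [hs2, Tcross, Tcross, Tcross] at hs1
    simpa using hs1
  refine ⟨Htrans, ?_⟩
  -- Step 3: full isometric invariance.
  intro 𝔟 c q y₀
  have hsplit := extPower_add b β P S hbc hβc hPc hSc 𝔟
    (fun x => c + cross q (y x - y₀)) (fun _ => c) (fun x => cross q (y x - y₀))
    (fun x => toEv ((A x).mulVec q)) (fun _ => (0 : Ev m)) (fun x => toEv ((A x).mulVec q))
    (fun _ => continuousOn_const) (contOn_cross q y₀ hyc) hzero (contOn_Aq hAc q)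
    (fun _ => rfl) (fun x => (zero_add _).symm)
  rw [hsplit, Htrans 𝔟 c, hrot 𝔟 q y₀, add_zero]
end
end
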